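/- Let r be a positive integer and let (x^{(k)})_{1≤k≤r} and (y^{(k)})_{1≤k≤r} be two finite sequences of real numbers in [1, ∞). Write [x_{1,k}; x_{2,k}, …] for the continued fraction expansion of x^{(k)} and [y_{1,k}; y_{2,k}, …] for that of y^{(k)}. If for every k with 1 ≤ k ≤ r the first k partial quotients agree, i.e., x_{j,k} = y_{j,k} for j = 1, …, k, then Σ_{k=1}^{r} |log(x^{(k)}) − log(y^{(k)})| < 20/θ³, where θ = (1+√5)/2 is the golden ratio. -/
import Mathlib


/-- Iterates of the Gauss map starting from `x`: the `j`-th complete quotient of `x`. -/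
noncomputable def gaussIter (x : ℝ) : ℕ → ℝ
  | 0 => x
  | j + 1 => (gaussIter x j - ⌊gaussIter x j⌋)⁻¹

/-- The `j`-th partial quotient (for `j ≥ 1`) of the continued fraction expansion
`x = [x₁; x₂, x₃, …]` of a real number `x`, so `x₁ = ⌊x⌋`. -/
noncomputable def partialQuotient (x : ℝ) (j : ℕ) : ℤ := ⌊gaussIter x (j - 1)⌋

lemma gaussIter_shift (x : ℝ) : ∀ n : ℕ, gaussIter x (n + 1) = gaussIter ((x - ⌊x⌋)⁻¹) n
  | 0 => by simp [gaussIter]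
  | n + 1 => by
      rw [show gaussIter x (n + 1 + 1) =
        (gaussIter x (n+1) - ⌊gaussIter x (n+1)⌋)⁻¹ from rfl, gaussIter_shift x n]
      rfl

lemma pq_one (x : ℝ) : partialQuotient x 1 = ⌊x⌋ := by
  simp [partialQuotient, gaussIter]

lemma pq_succ (x : ℝ) (j : ℕ) (hj : 1 ≤ j) :
    partialQuotient x (j + 1) = partialQuotient ((x - ⌊x⌋)⁻¹) j := by
  obtain ⟨n, rfl⟩ := Nat.exists_eq_add_of_le hj
  show ⌊gaussIter x (1 + n + 1 - 1)⌋ = ⌊gaussIter _ (1 + n - 1)⌋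
  rw [show 1 + n + 1 - 1 = n + 1 by omega, show 1 + n - 1 = n by omega, gaussIter_shift]

lemma pq_two_int (x : ℝ) (h : x = ⌊x⌋) : partialQuotient x 2 = 0 := by
  show ⌊gaussIter x 1⌋ = 0
  rw [show gaussIter x 1 = (x - ⌊x⌋)⁻¹ from rfl, ← h, sub_self, inv_zero]
  simp

lemma frac_pos_lt (x : ℝ) (h : x ≠ ⌊x⌋) : 0 < x - ⌊x⌋ ∧ x - ⌊x⌋ < 1 := by
  have h1 := Int.floor_le x
  have h2 := Int.lt_floor_add_one x
  constructor
  · rcases lt_or_eq_of_le h1 with h' | h'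
    · linarith
    · exact absurd h'.symm h
  · linarith

lemma one_lt_inv_frac (x : ℝ) (h : x ≠ ⌊x⌋) : 1 < (x - ⌊x⌋)⁻¹ := by
  obtain ⟨h0, h1⟩ := frac_pos_lt x h
  exact (one_lt_inv₀ h0).mpr h1

lemma eq_floor_of_pq2 (x : ℝ) (h : partialQuotient x 2 = 0) : x = ⌊x⌋ := by
  by_contra hne
  have hinv : 1 < (x - ⌊x⌋)⁻¹ := one_lt_inv_frac x hne
  have : partialQuotient x 2 = ⌊(x - ⌊x⌋)⁻¹⌋ := rfl
  rw [this] at h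
  have : (1 : ℤ) ≤ ⌊(x - ⌊x⌋)⁻¹⌋ := by
    rw [Int.le_floor]; exact_mod_cast hinv.le
  omega

/-- Key lemma: agreement of the first `k` partial quotients forces closeness. -/
lemma key_close : ∀ k : ℕ, 1 ≤ k → ∀ x y : ℝ, 1 ≤ x → 1 ≤ y →
    (∀ j, 1 ≤ j → j ≤ k → partialQuotient x j = partialQuotient y j) →
    |x - y| ≤ 4 * (1/2 : ℝ) ^ k := by
  intro k
  induction k using Nat.strong_induction_on with
  | _ k ih =>
    intro hk x y hx hy hag
    have hfl : ⌊x⌋ = ⌊y⌋ := by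
      have := hag 1 le_rfl hk
      rwa [pq_one, pq_one] at this
    -- basic bound from equal floors
    have hbase : |x - y| ≤ 1 := by
      have h1 := Int.floor_le x
      have h2 := Int.lt_floor_add_one x
      have h3 := Int.floor_le y
      have h4 := Int.lt_floor_add_one y
      rw [hfl] at h1 h2
      rw [abs_le]
      constructor <;> linarith
    match k, hk with
    | 1, _ => calc |x - y| ≤ 1 := hbase
                _ ≤ 4 * (1/2:ℝ)^1 := by norm_num
    | 2, _ => calc |x - y| ≤ 1 := hbase
                _ ≤ 4 * (1/2:ℝ)^2 := by norm_num
    | (m+3), _ =>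
      have hbndpos : (0:ℝ) < 4 * (1/2:ℝ) ^ (m+3) := by positivity
      by_cases hxi : x = ⌊x⌋
      · -- x integer forces y = x
        have h2 : partialQuotient y 2 = 0 := by
          rw [← hag 2 (by omega) (by omega)]; exact pq_two_int x hxi
        have hyi : y = ⌊y⌋ := eq_floor_of_pq2 y h2
        have : x = y := by rw [hxi, hyi, hfl]
        rw [this, sub_self, abs_zero]; exact hbndpos.le
      by_cases hyi : y = ⌊y⌋
      · have h2 : partialQuotient x 2 = 0 := by
          rw [hag 2 (by omega) (by omega)]; exact pq_two_int y hyi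
        have hxi' : x = ⌊x⌋ := eq_floor_of_pq2 x h2
        exact absurd hxi' hxi
      -- main case: both non-integral
      set x' : ℝ := (x - ⌊x⌋)⁻¹ with hx'def
      set y' : ℝ := (y - ⌊y⌋)⁻¹ with hy'def
      have hx'1 : 1 < x' := one_lt_inv_frac x hxi
      have hy'1 : 1 < y' := one_lt_inv_frac y hyi
      have hag' : ∀ j, 1 ≤ j → j ≤ m + 2 → partialQuotient x' j = partialQuotient y' j := by
        intro j hj1 hj2
        have := hag (j+1) (by omega) (by omega)
        rwa [pq_succ x j hj1, pq_succ y j hj1] at this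
      have hfl' : ⌊x'⌋ = ⌊y'⌋ := by
        have := hag' 1 le_rfl (by omega)
        rwa [pq_one, pq_one] at this
      -- express x, y
      have hfx := frac_pos_lt x hxi
      have hfy := frac_pos_lt y hyi
      have hxeq : x = ⌊x⌋ + x'⁻¹ := by
        rw [hx'def, inv_inv]; ring
      have hyeq : y = ⌊y⌋ + y'⁻¹ := by
        rw [hy'def, inv_inv]; ring
      by_cases hx'i : x' = ⌊x'⌋
      · -- x' integer forces y' = x', hence x = y
        have h3 : partialQuotient y 3 = 0 := by
          rw [← hag 3 (by omega) (by omega)]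
          rw [show (3:ℕ) = 2 + 1 from rfl, pq_succ x 2 (by omega), ← hx'def]
          exact pq_two_int x' hx'i
        have h3' : partialQuotient y' 2 = 0 := by
          rw [hy'def, ← pq_succ y 2 (by omega)]
          exact h3
        have hy'i : y' = ⌊y'⌋ := eq_floor_of_pq2 y' h3'
        have hxy' : x' = y' := by rw [hx'i, hy'i, hfl']
        have : x = y := by rw [hxeq, hyeq, hfl, hxy']
        rw [this, sub_self, abs_zero]; exact hbndpos.le
      by_cases hy'i : y' = ⌊y'⌋
      · have h3 : partialQuotient x' 2 = 0 := by
          have := hag' 2 (by omega) (by omega)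
          rw [this]
          exact pq_two_int y' hy'i
        exact absurd (eq_floor_of_pq2 x' h3) hx'i
      -- now both x', y' non-integral; go one more level
      set x'' : ℝ := (x' - ⌊x'⌋)⁻¹ with hx''def
      set y'' : ℝ := (y' - ⌊y'⌋)⁻¹ with hy''def
      have hx''1 : 1 < x'' := one_lt_inv_frac x' hx'i
      have hy''1 : 1 < y'' := one_lt_inv_frac y' hy'i
      have hag'' : ∀ j, 1 ≤ j → j ≤ m + 1 → partialQuotient x'' j = partialQuotient y'' j := by
        intro j hj1 hj2
        have := hag' (j+1) (by omega) (by omega)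
        rwa [pq_succ x' j hj1, pq_succ y' j hj1] at this
      have ihb : |x'' - y''| ≤ 4 * (1/2:ℝ) ^ (m+1) :=
        ih (m+1) (by omega) (by omega) x'' y'' hx''1.le hy''1.le hag''
      -- floor of x' is ≥ 1
      have ha2 : (1:ℤ) ≤ ⌊x'⌋ := by
        rw [Int.le_floor]; exact_mod_cast hx'1.le
      have ha2R : (1:ℝ) ≤ (⌊x'⌋ : ℝ) := by exact_mod_cast ha2
      have hx'eq : x' = ⌊x'⌋ + x''⁻¹ := by rw [hx''def, inv_inv]; ring
      have hy'eq : y' = ⌊y'⌋ + y''⁻¹ := by rw [hy''def, inv_inv]; ring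
      -- key algebraic identity
      have hx''0 : (0:ℝ) < x'' := by linarith
      have hy''0 : (0:ℝ) < y'' := by linarith
      have hx'0 : (0:ℝ) < x' := by linarith
      have hy'0 : (0:ℝ) < y' := by linarith
      have hiden : x - y = (x'' - y'') / (x'' * y'' * x' * y') := by
        rw [hxeq, hyeq, hfl]
        rw [hx'eq, hy'eq, hfl'] at *
        field_simp
        ring
      have hD4 : (4:ℝ) ≤ x'' * y'' * x' * y' := by
        have hxx : x'' + 1 ≤ x' * x'' := by
          rw [hx'eq]
          have : (⌊x'⌋:ℝ) * x'' ≥ 1 * x'' := by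
            apply mul_le_mul_of_nonneg_right ha2R hx''0.le
          calc x'' + 1 ≤ (⌊x'⌋:ℝ) * x'' + 1 := by linarith
            _ = ((⌊x'⌋:ℝ) + x''⁻¹) * x'' := by field_simp
        have hyy : y'' + 1 ≤ y' * y'' := by
          rw [hy'eq, hfl'] at *
          have : (⌊y'⌋:ℝ) * y'' ≥ 1 * y'' := by
            apply mul_le_mul_of_nonneg_right (by rw [← hfl']; exact ha2R) hy''0.le
          calc y'' + 1 ≤ (⌊y'⌋:ℝ) * y'' + 1 := by linarith
            _ = ((⌊y'⌋:ℝ) + y''⁻¹) * y'' := by field_simp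
        nlinarith [mul_pos hx'0 hx''0, mul_pos hy'0 hy''0]
      have hDpos : (0:ℝ) < x'' * y'' * x' * y' := by positivity
      rw [hiden, abs_div, abs_of_pos hDpos]
      calc |x'' - y''| / (x'' * y'' * x' * y')
          ≤ (4 * (1/2:ℝ)^(m+1)) / 4 :=
            div_le_div₀ (by positivity) ihb (by norm_num) hD4
        _ = 4 * (1/2:ℝ)^(m+3) := by ring

lemma log_lip {x y : ℝ} (hx : 1 ≤ x) (hy : 1 ≤ y) :
    |Real.log x - Real.log y| ≤ |x - y| := by
  wlog hxy : y ≤ x generalizing x y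
  · rw [abs_sub_comm, abs_sub_comm x y]
    exact this hy hx (le_of_not_ge hxy)
  have hx0 : (0:ℝ) < x := by linarith
  have hy0 : (0:ℝ) < y := by linarith
  have hlog : Real.log y ≤ Real.log x := Real.log_le_log hy0 hxy
  rw [abs_of_nonneg (by linarith), abs_of_nonneg (by linarith)]
  have h1 : Real.log x - Real.log y = Real.log (x / y) := (Real.log_div hx0.ne' hy0.ne').symm
  rw [h1]
  have h2 : Real.log (x / y) ≤ x / y - 1 := Real.log_le_sub_one_of_pos (by positivity)
  have h3 : x / y - 1 ≤ x - y := by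
    rw [div_sub_one hy0.ne', div_le_iff₀ hy0]
    nlinarith
  linarith

/-- Lemma 6: if for every `1 ≤ k ≤ r` the real numbers `x k, y k ∈ [1, ∞)` have the same
first `k` partial quotients, then `∑_{k=1}^{r} |log (x k) - log (y k)| < 20/θ³`,
where `θ = (1+√5)/2`. -/
theorem statement11 (r : ℕ) (hr : 1 ≤ r) (x y : ℕ → ℝ)
    (hx : ∀ k, 1 ≤ k → k ≤ r → 1 ≤ x k) (hy : ∀ k, 1 ≤ k → k ≤ r → 1 ≤ y k)
    (hagree : ∀ k, 1 ≤ k → k ≤ r → ∀ j, 1 ≤ j → j ≤ k →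
      partialQuotient (x k) j = partialQuotient (y k) j) :
    ∑ k ∈ Finset.Icc 1 r, |Real.log (x k) - Real.log (y k)| <
      20 / ((1 + Real.sqrt 5) / 2) ^ 3 := by
  have hsum1 : ∑ k ∈ Finset.Icc 1 r, |Real.log (x k) - Real.log (y k)|
      ≤ ∑ k ∈ Finset.Icc 1 r, 4 * (1/2:ℝ) ^ k := by
    apply Finset.sum_le_sum
    intro k hk
    rw [Finset.mem_Icc] at hk
    calc |Real.log (x k) - Real.log (y k)| ≤ |x k - y k| :=
          log_lip (hx k hk.1 hk.2) (hy k hk.1 hk.2)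
      _ ≤ 4 * (1/2:ℝ)^k := key_close k hk.1 (x k) (y k) (hx k hk.1 hk.2) (hy k hk.1 hk.2)
          (hagree k hk.1 hk.2)
  have hsum2 : ∑ k ∈ Finset.Icc 1 r, 4 * (1/2:ℝ) ^ k ≤ 4 := by
    have h1 : ∑ k ∈ Finset.Icc 1 r, (1/2:ℝ) ^ k ≤ 1 := by
      have hgeo : ∀ n : ℕ, ∑ k ∈ Finset.Icc 1 n, (1/2:ℝ)^k = 1 - (1/2:ℝ)^n := by
        intro n
        induction n with
        | zero => simp
        | succ n ihn => rw [Finset.sum_Icc_succ_top (by omega), ihn]; ring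
      rw [hgeo r]
      have : (0:ℝ) < (1/2:ℝ)^r := by positivity
      linarith
    calc ∑ k ∈ Finset.Icc 1 r, 4 * (1/2:ℝ) ^ k
        = 4 * ∑ k ∈ Finset.Icc 1 r, (1/2:ℝ) ^ k := by rw [Finset.mul_sum]
      _ ≤ 4 * 1 := by linarith
      _ = 4 := by norm_num
  have hrhs : (4:ℝ) < 20 / ((1 + Real.sqrt 5) / 2) ^ 3 := by
    have hs5 : Real.sqrt 5 < 3 := by
      nlinarith [Real.sq_sqrt (by norm_num : (0:ℝ) ≤ 5), Real.sqrt_nonneg 5]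
    have hs0 : (0:ℝ) ≤ Real.sqrt 5 := Real.sqrt_nonneg 5
    have hcube : ((1 + Real.sqrt 5) / 2) ^ 3 = 2 + Real.sqrt 5 := by
      have h5 : Real.sqrt 5 ^ 2 = 5 := Real.sq_sqrt (by norm_num)
      field_simp
      nlinarith [h5]
    rw [hcube]
    rw [lt_div_iff₀ (by linarith)]
    linarith
  linarith
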